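/- For every u ∈ (−1,1) and all ξ, x ∈ ℝ, the linearization of the stationary system maps the tangent vector t_2 = (∂_uθ_0, ∂_uψ_0) to −t_1 = −(∂_ξθ_0, ∂_ξψ_0): (i) u·∂_ξ(∂_uθ_0)(ξ,u,x) − ∂_uψ_0(ξ,u,x) + ∂_ξθ_0(ξ,u,x) = 0, and (ii) u·∂_ξ(∂_uψ_0)(ξ,u,x) − ∂_x²(∂_uθ_0)(ξ,u,x) + cos(θ_K(γ(u)(x−ξ)))·∂_uθ_0(ξ,u,x) + ∂_ξψ_0(ξ,u,x) = 0. -/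

import Mathlib

open Real


noncomputable def θK (x : ℝ) : ℝ := 4 * Real.arctan (Real.exp x)

noncomputable def γ (u : ℝ) : ℝ := 1 / Real.sqrt (1 - u ^ 2)

noncomputable def θ₀ (ξ u x : ℝ) : ℝ := θK (γ u * (x - ξ))

noncomputable def ψ₀ (ξ u x : ℝ) : ℝ := -(u * γ u * deriv θK (γ u * (x - ξ)))

/-- `∂_u θ₀` of the soliton pair. -/
noncomputable def t₂θ (ξ u x : ℝ) : ℝ := deriv (fun u' => θ₀ ξ u' x) u

/-- `∂_u ψ₀` of the soliton pair. -/
noncomputable def t₂ψ (ξ u x : ℝ) : ℝ := deriv (fun u' => ψ₀ ξ u' x) u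


noncomputable def f1 (z : ℝ) : ℝ := 4 * Real.exp z / (1 + Real.exp z ^ 2)
noncomputable def f2 (z : ℝ) : ℝ := 4 * Real.exp z * (1 - Real.exp z ^ 2) / (1 + Real.exp z ^ 2) ^ 2
noncomputable def f3 (z : ℝ) : ℝ :=
  (4 * Real.exp z - 24 * Real.exp z ^ 3 + 4 * Real.exp z ^ 5) / (1 + Real.exp z ^ 2) ^ 3

lemma den_ne (z : ℝ) : (1 : ℝ) + Real.exp z ^ 2 ≠ 0 := by positivity

lemma hasDerivAt_θK (z : ℝ) : HasDerivAt θK (f1 z) z := by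
  have h : HasDerivAt θK (4 * (1 / (1 + Real.exp z ^ 2) * Real.exp z)) z :=
    ((Real.hasDerivAt_arctan (Real.exp z)).comp z (Real.hasDerivAt_exp z)).const_mul 4
  convert h using 1
  unfold f1; ring

lemma hasDerivAt_f1 (z : ℝ) : HasDerivAt f1 (f2 z) z := by
  have hN : HasDerivAt (fun x : ℝ => 4 * Real.exp x) (4 * Real.exp z) z :=
    (Real.hasDerivAt_exp z).const_mul 4
  have hD : HasDerivAt (fun x : ℝ => 1 + Real.exp x ^ 2)
      ((2 : ℕ) * Real.exp z ^ 1 * Real.exp z) z := ((Real.hasDerivAt_exp z).pow 2).const_add 1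
  have h := hN.div hD (den_ne z)
  convert h using 1
  · rfl
  · rfl
  · rfl
  unfold f2
  have := den_ne z
  field_simp
  ring

lemma hasDerivAt_f2 (z : ℝ) : HasDerivAt f2 (f3 z) z := by
  have hA : HasDerivAt (fun x : ℝ => 1 - Real.exp x ^ 2)
      (-((2 : ℕ) * Real.exp z ^ 1 * Real.exp z)) z := ((Real.hasDerivAt_exp z).pow 2).const_sub 1
  have hN := ((Real.hasDerivAt_exp z).const_mul 4).mul hA
  have hD := (((Real.hasDerivAt_exp z).pow 2).const_add 1).pow 2
  have h := hN.div hD (pow_ne_zero 2 (den_ne z))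
  convert h using 1
  · rfl
  · rfl
  · rfl
  unfold f3
  simp only [Pi.mul_apply, Pi.pow_apply]
  have := den_ne z
  field_simp
  ring

lemma cos_θK (z : ℝ) :
    Real.cos (θK z) = 1 - 8 * Real.exp z ^ 2 / (1 + Real.exp z ^ 2) ^ 2 := by
  set E := Real.exp z with hE
  have h0 : (0 : ℝ) < 1 + E ^ 2 := by positivity
  have hsq : Real.sqrt (1 + E ^ 2) ^ 2 = 1 + E ^ 2 := Real.sq_sqrt h0.le
  have h4 : θK z = 2 * (2 * Real.arctan E) := by unfold θK; ring
  have hc2 : Real.cos (2 * Real.arctan E) = (1 - E ^ 2) / (1 + E ^ 2) := by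
    rw [Real.cos_two_mul, Real.cos_arctan, div_pow, one_pow, hsq]
    field_simp
    ring
  rw [h4, Real.cos_two_mul, hc2]
  field_simp
  ring

lemma hasDerivAt_γ {u : ℝ} (h : 0 < 1 - u ^ 2) :
    HasDerivAt γ (u / Real.sqrt (1 - u ^ 2) ^ 3) u := by
  have hs0 : 0 < Real.sqrt (1 - u ^ 2) := Real.sqrt_pos.mpr h
  have h1 : HasDerivAt (fun u' : ℝ => 1 - u' ^ 2) (-((2 : ℕ) * u ^ 1 * 1)) u :=
    ((hasDerivAt_id u).pow 2).const_sub 1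
  have h2 : HasDerivAt Real.sqrt (1 / (2 * Real.sqrt (1 - u ^ 2))) (1 - u ^ 2) :=
    Real.hasDerivAt_sqrt h.ne'
  have h3 := h2.comp u h1
  have h4 := h3.inv hs0.ne'
  have hγeq : γ = fun u' : ℝ => (Real.sqrt (1 - u' ^ 2))⁻¹ := by
    funext v; rw [γ, one_div]
  rw [hγeq]
  convert h4 using 1
  · rfl
  · rfl
  · rfl
  rw [Function.comp_apply]
  have hsq : Real.sqrt (1 - u ^ 2) ^ 2 = 1 - u ^ 2 := Real.sq_sqrt h.le
  field_simp
  ring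

lemma θK_comp {g : ℝ → ℝ} {g' t : ℝ} (h : HasDerivAt g g' t) :
    HasDerivAt (fun y => θK (g y)) (f1 (g t) * g') t := (hasDerivAt_θK (g t)).comp t h

lemma f1_comp {g : ℝ → ℝ} {g' t : ℝ} (h : HasDerivAt g g' t) :
    HasDerivAt (fun y => f1 (g y)) (f2 (g t) * g') t := (hasDerivAt_f1 (g t)).comp t h

lemma f2_comp {g : ℝ → ℝ} {g' t : ℝ} (h : HasDerivAt g g' t) :
    HasDerivAt (fun y => f2 (g y)) (f3 (g t) * g') t := (hasDerivAt_f2 (g t)).comp t h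


set_option maxHeartbeats 1600000 in
/-- The linearization of the stationary system maps the tangent vector
`t₂ = (∂_u θ₀, ∂_u ψ₀)` to `−t₁ = −(∂_ξ θ₀, ∂_ξ ψ₀)`. -/
theorem linearization_maps_t2_to_neg_t1 (u : ℝ) (hu : u ∈ Set.Ioo (-1 : ℝ) 1) :
    ∀ ξ x : ℝ,
      u * deriv (fun ξ' => t₂θ ξ' u x) ξ - t₂ψ ξ u x
          + deriv (fun ξ' => θ₀ ξ' u x) ξ = 0 ∧
      u * deriv (fun ξ' => t₂ψ ξ' u x) ξ - deriv (deriv (fun x' => t₂θ ξ u x')) x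
          + Real.cos (θK (γ u * (x - ξ))) * t₂θ ξ u x
          + deriv (fun ξ' => ψ₀ ξ' u x) ξ = 0 := by
  obtain ⟨hu1, hu2⟩ := hu
  have h1u : 0 < 1 - u ^ 2 := by nlinarith
  set s := Real.sqrt (1 - u ^ 2) with hsdef
  have hs0 : 0 < s := Real.sqrt_pos.mpr h1u
  have hs2 : s ^ 2 = 1 - u ^ 2 := Real.sq_sqrt h1u.le
  have hγu : γ u = 1 / s := rfl
  have hγ' : HasDerivAt γ (u / s ^ 3) u := hasDerivAt_γ h1u
  have hdθK : deriv θK = f1 := funext fun z => (hasDerivAt_θK z).deriv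
  have ht2θ : ∀ ξ' x' : ℝ, t₂θ ξ' u x' = f1 (1 / s * (x' - ξ')) * (u / s ^ 3) * (x' - ξ') := by
    intro ξ' x'
    have h : HasDerivAt (fun u' => θ₀ ξ' u' x')
        (f1 (γ u * (x' - ξ')) * (u / s ^ 3 * (x' - ξ'))) u :=
      (hasDerivAt_θK (γ u * (x' - ξ'))).comp u (hγ'.mul_const (x' - ξ'))
    rw [t₂θ, h.deriv, hγu]; ring
  have ht2ψ : ∀ ξ' x' : ℝ, t₂ψ ξ' u x' =
      -((1 * (1 / s) + u * (u / s ^ 3)) * f1 (1 / s * (x' - ξ'))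
        + u * (1 / s) * (f2 (1 / s * (x' - ξ')) * (u / s ^ 3 * (x' - ξ')))) := by
    intro ξ' x'
    have hfun : (fun u' => ψ₀ ξ' u' x') = fun u' => -(u' * γ u' * f1 (γ u' * (x' - ξ'))) := by
      funext v; rw [ψ₀, hdθK]
    have hprod : HasDerivAt (fun u' => u' * γ u' * f1 (γ u' * (x' - ξ')))
        ((1 * γ u + u * (u / s ^ 3)) * f1 (γ u * (x' - ξ'))
          + u * γ u * (f2 (γ u * (x' - ξ')) * (u / s ^ 3 * (x' - ξ')))) u :=
      ((hasDerivAt_id u).mul hγ').mul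
        (f1_comp (hγ'.mul_const (x' - ξ')))
    rw [t₂ψ, hfun, hprod.fun_neg.deriv, hγu]
  intro ξ x
  have hzξ : HasDerivAt (fun ξ'' : ℝ => 1 / s * (x - ξ'')) (1 / s * -1) ξ :=
    ((hasDerivAt_id ξ).const_sub x).const_mul (1 / s)
  have hzx : ∀ x' : ℝ, HasDerivAt (fun x'' : ℝ => 1 / s * (x'' - ξ)) (1 / s * 1) x' :=
    fun x' => ((hasDerivAt_id x').sub_const ξ).const_mul (1 / s)
  -- derivative of t₂θ in ξ
  have hA : deriv (fun ξ' => t₂θ ξ' u x) ξ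
      = f2 (1 / s * (x - ξ)) * (1 / s * -1) * (u / s ^ 3) * (x - ξ)
        + f1 (1 / s * (x - ξ)) * (u / s ^ 3) * -1 := by
    have hfun : (fun ξ' => t₂θ ξ' u x)
        = fun ξ' => f1 (1 / s * (x - ξ')) * (u / s ^ 3) * (x - ξ') :=
      funext fun ξ' => ht2θ ξ' x
    have h : HasDerivAt (fun ξ' => f1 (1 / s * (x - ξ')) * (u / s ^ 3) * (x - ξ'))
        (f2 (1 / s * (x - ξ)) * (1 / s * -1) * (u / s ^ 3) * (x - ξ)
          + f1 (1 / s * (x - ξ)) * (u / s ^ 3) * -1) ξ := by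
      exact (((f1_comp hzξ).mul_const (u / s ^ 3)).mul ((hasDerivAt_id ξ).const_sub x))
    rw [hfun, h.deriv]
  -- derivative of θ₀ in ξ
  have hB : deriv (fun ξ' => θ₀ ξ' u x) ξ = f1 (1 / s * (x - ξ)) * (1 / s * -1) := by
    have hfun : (fun ξ' => θ₀ ξ' u x) = fun ξ' => θK (1 / s * (x - ξ')) := rfl
    have h : HasDerivAt (fun ξ' => θK (1 / s * (x - ξ')))
        (f1 (1 / s * (x - ξ)) * (1 / s * -1)) ξ := θK_comp hzξ
    rw [hfun, h.deriv]
  -- derivative of ψ₀ in ξ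
  have hC : deriv (fun ξ' => ψ₀ ξ' u x) ξ
      = -(u * (1 / s) * (f2 (1 / s * (x - ξ)) * (1 / s * -1))) := by
    have hfun : (fun ξ' => ψ₀ ξ' u x) = fun ξ' => -(u * (1 / s) * f1 (1 / s * (x - ξ'))) := by
      funext ξ'; rw [ψ₀, hdθK, hγu]
    have h : HasDerivAt (fun ξ' => -(u * (1 / s) * f1 (1 / s * (x - ξ'))))
        (-(u * (1 / s) * (f2 (1 / s * (x - ξ)) * (1 / s * -1)))) ξ :=
      ((f1_comp hzξ).const_mul (u * (1 / s))).neg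
    rw [hfun, h.deriv]
  -- derivative of t₂ψ in ξ
  have hD : deriv (fun ξ' => t₂ψ ξ' u x) ξ
      = -((1 * (1 / s) + u * (u / s ^ 3)) * (f2 (1 / s * (x - ξ)) * (1 / s * -1))
          + u * (1 / s) * (f3 (1 / s * (x - ξ)) * (1 / s * -1) * (u / s ^ 3 * (x - ξ))
            + f2 (1 / s * (x - ξ)) * (u / s ^ 3 * -1))) := by
    have hfun : (fun ξ' => t₂ψ ξ' u x)
        = fun ξ' => -((1 * (1 / s) + u * (u / s ^ 3)) * f1 (1 / s * (x - ξ'))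
            + u * (1 / s) * (f2 (1 / s * (x - ξ')) * (u / s ^ 3 * (x - ξ')))) :=
      funext fun ξ' => ht2ψ ξ' x
    have h2b : HasDerivAt (fun ξ' : ℝ => u / s ^ 3 * (x - ξ')) (u / s ^ 3 * -1) ξ :=
      ((hasDerivAt_id ξ).const_sub x).const_mul (u / s ^ 3)
    have h : HasDerivAt (fun ξ' => (1 * (1 / s) + u * (u / s ^ 3)) * f1 (1 / s * (x - ξ'))
          + u * (1 / s) * (f2 (1 / s * (x - ξ')) * (u / s ^ 3 * (x - ξ'))))
        ((1 * (1 / s) + u * (u / s ^ 3)) * (f2 (1 / s * (x - ξ)) * (1 / s * -1))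
          + u * (1 / s) * (f3 (1 / s * (x - ξ)) * (1 / s * -1) * (u / s ^ 3 * (x - ξ))
            + f2 (1 / s * (x - ξ)) * (u / s ^ 3 * -1))) ξ :=
      ((f1_comp hzξ).const_mul _).add (((f2_comp hzξ).mul h2b).const_mul (u * (1 / s)))
    rw [hfun, h.fun_neg.deriv]
  -- first x-derivative of t₂θ
  have hE1 : deriv (fun x' => t₂θ ξ u x')
      = fun x' => f2 (1 / s * (x' - ξ)) * (1 / s * 1) * (u / s ^ 3) * (x' - ξ)
          + f1 (1 / s * (x' - ξ)) * (u / s ^ 3) * 1 := by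
    funext x'
    have hfun : (fun x'' => t₂θ ξ u x'')
        = fun x'' => f1 (1 / s * (x'' - ξ)) * (u / s ^ 3) * (x'' - ξ) :=
      funext fun x'' => ht2θ ξ x''
    have h : HasDerivAt (fun x'' => f1 (1 / s * (x'' - ξ)) * (u / s ^ 3) * (x'' - ξ))
        (f2 (1 / s * (x' - ξ)) * (1 / s * 1) * (u / s ^ 3) * (x' - ξ)
          + f1 (1 / s * (x' - ξ)) * (u / s ^ 3) * 1) x' :=
      (((f1_comp (hzx x')).mul_const (u / s ^ 3)).mul ((hasDerivAt_id x').sub_const ξ))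
    rw [hfun, h.deriv]
  -- second x-derivative of t₂θ
  have hE : deriv (deriv (fun x' => t₂θ ξ u x')) x
      = f3 (1 / s * (x - ξ)) * (1 / s * 1) * (1 / s * 1) * (u / s ^ 3) * (x - ξ)
        + f2 (1 / s * (x - ξ)) * (1 / s * 1) * (u / s ^ 3) * 1
        + f2 (1 / s * (x - ξ)) * (1 / s * 1) * (u / s ^ 3) * 1 := by
    rw [hE1]
    have h : HasDerivAt (fun x' => f2 (1 / s * (x' - ξ)) * (1 / s * 1) * (u / s ^ 3) * (x' - ξ)
          + f1 (1 / s * (x' - ξ)) * (u / s ^ 3) * 1)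
        (f3 (1 / s * (x - ξ)) * (1 / s * 1) * (1 / s * 1) * (u / s ^ 3) * (x - ξ)
          + f2 (1 / s * (x - ξ)) * (1 / s * 1) * (u / s ^ 3) * 1
          + f2 (1 / s * (x - ξ)) * (1 / s * 1) * (u / s ^ 3) * 1) x :=
      (((((f2_comp (hzx x)).mul_const (1 / s * 1)).mul_const (u / s ^ 3)).mul
          ((hasDerivAt_id x).sub_const ξ)).add
        (((f1_comp (hzx x)).mul_const (u / s ^ 3)).mul_const 1))
    exact h.deriv
  constructor
  · rw [hA, hB, ht2ψ ξ x]
    ring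
  · have hterm : Real.cos (θK (1 / s * (x - ξ))) * (f1 (1 / s * (x - ξ)) * (u / s ^ 3) * (x - ξ))
        = f3 (1 / s * (x - ξ)) * (u / s ^ 3) * (x - ξ) := by
      rw [cos_θK]
      unfold f1 f3
      have hden : (1 : ℝ) + Real.exp (1 / s * (x - ξ)) ^ 2 ≠ 0 := den_ne _
      field_simp
      ring
    rw [hD, hE, hC, hγu, ht2θ ξ x, hterm]
    have hsne : s ≠ 0 := hs0.ne'
    field_simp
    linear_combination (u * (2 * s * f2 ((x - ξ) / s) + (x - ξ) * f3 ((x - ξ) / s))) * hs2
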